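/- For α > 0, b ∈ ℝ, and s > 0 with s^α > |b|, the Laplace transform of t ↦ E_α(b t^α) equals s^{α−1}/(s^α − b). -/

import Mathlib

set_option maxHeartbeats 1000000

open MeasureTheory

lemma aux_integral (α s : ℝ) (k : ℕ) (hα : 0 < α) (hs : 0 < s) :
    ∫ t in Set.Ioi (0:ℝ), t ^ (α * k) * Real.exp (-(s * t)) =
      (1 / s) ^ (α * k + 1) * Real.Gamma (α * k + 1) := by
  have h := Real.integral_rpow_mul_exp_neg_mul_Ioi
    (a := α * k + 1) (r := s) (by positivity) hs
  simpa using h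

lemma aux_integrable (α s : ℝ) (k : ℕ) (hα : 0 < α) (hs : 0 < s) :
    IntegrableOn (fun t : ℝ => t ^ (α * k) * Real.exp (-(s * t))) (Set.Ioi 0) := by
  have h := integrableOn_rpow_mul_exp_neg_mul_rpow
    (p := 1) (s := α * k) (b := s) (lt_of_lt_of_le neg_one_lt_zero (by positivity)) one_pos hs
  refine h.congr_fun (fun x hx => ?_) measurableSet_Ioi
  dsimp only
  rw [Real.rpow_one, neg_mul]

/-- For `α > 0`, `b ∈ ℝ` and `s > 0` with `s > 0` etc. -/
theorem laplace_mittagLeffler (α b s : ℝ) (hα : 0 < α) (hs : 0 < s) (hb : |b| < s ^ α) :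
    ∫ t in Set.Ioi (0:ℝ), Real.exp (-s * t) *
        (∑' k : ℕ, (b * t ^ α) ^ k / Real.Gamma (α * k + 1)) =
      s ^ (α - 1) / (s ^ α - b) := by
  have hsα : (0:ℝ) < s ^ α := Real.rpow_pos_of_pos hs α
  have hΓ : ∀ k : ℕ, (0:ℝ) < Real.Gamma (α * k + 1) := fun k =>
    Real.Gamma_pos_of_pos (by positivity)
  set F : ℕ → ℝ → ℝ := fun k t => Real.exp (-s * t) * ((b * t ^ α) ^ k / Real.Gamma (α * k + 1))
    with hF
  -- the nice form of each term on Ioi 0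
  have hcongr : ∀ k : ℕ, ∀ t ∈ Set.Ioi (0:ℝ),
      F k t = (b ^ k / Real.Gamma (α * k + 1)) * (t ^ (α * k) * Real.exp (-(s * t))) := by
    intro k t ht
    have ht0 : (0:ℝ) ≤ t := le_of_lt ht
    rw [hF]
    simp only
    rw [mul_pow, ← Real.rpow_natCast (t ^ α) k, ← Real.rpow_mul ht0]
    ring_nf
  have hint : ∀ k : ℕ, IntegrableOn (F k) (Set.Ioi 0) := by
    intro k
    have h1 : IntegrableOn
        (fun t : ℝ => (b ^ k / Real.Gamma (α * k + 1)) * (t ^ (α * k) * Real.exp (-(s * t))))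
        (Set.Ioi 0) := (aux_integrable α s k hα hs).const_mul _
    exact h1.congr_fun (fun t ht => (hcongr k t ht).symm) measurableSet_Ioi
  have hval : ∀ k : ℕ, ∫ t in Set.Ioi (0:ℝ), F k t = b ^ k * (1 / s) ^ (α * k + 1) := by
    intro k
    rw [setIntegral_congr_fun measurableSet_Ioi (hcongr k), integral_const_mul,
      aux_integral α s k hα hs]
    field_simp
  have hnormval : ∀ k : ℕ, ∫ t in Set.Ioi (0:ℝ), ‖F k t‖ = |b| ^ k * (1 / s) ^ (α * k + 1) := by
    intro k
    have hcongr' : ∀ t ∈ Set.Ioi (0:ℝ),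
        ‖F k t‖ = (|b| ^ k / Real.Gamma (α * k + 1)) * (t ^ (α * k) * Real.exp (-(s * t))) := by
      intro t ht
      have ht0 : (0:ℝ) < t := ht
      rw [hcongr k t ht, Real.norm_eq_abs, abs_mul, abs_mul, abs_div, abs_pow,
        abs_of_pos (hΓ k), abs_of_pos (Real.rpow_pos_of_pos ht0 _),
        abs_of_pos (Real.exp_pos _)]
    rw [setIntegral_congr_fun measurableSet_Ioi hcongr', integral_const_mul,
      aux_integral α s k hα hs]
    field_simp
  -- geometric quantity
  have hkey : ∀ k : ℕ, (1 / s : ℝ) ^ (α * k + 1) = (1 / s) * ((s ^ α)⁻¹) ^ k := by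
    intro k
    have h1 : ((s ^ α)⁻¹ : ℝ) ^ k = (s ^ (α * k))⁻¹ := by
      rw [inv_pow, ← Real.rpow_natCast (s ^ α) k, ← Real.rpow_mul hs.le]
    rw [Real.rpow_add (by positivity), Real.rpow_one, one_div, Real.inv_rpow hs.le, h1]
    ring
  have hratio : |b| * (s ^ α)⁻¹ < 1 := by
    rw [← div_eq_mul_inv, div_lt_one hsα]; exact hb
  have hsum : Summable fun k : ℕ => ∫ t in Set.Ioi (0:ℝ), ‖F k t‖ := by
    have h2 : ∀ k : ℕ, |b| ^ k * (1 / s * (s ^ α)⁻¹ ^ k) = (1 / s) * (|b| * (s ^ α)⁻¹) ^ k := by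
      intro k; rw [mul_pow]; ring
    simp only [hnormval, hkey, h2]
    exact (summable_geometric_of_lt_one (by positivity) hratio).mul_left _
  have hswap := integral_tsum_of_summable_integral_norm hint hsum
  -- rewrite the target integrand as a tsum
  have hintegrand : ∀ t : ℝ, Real.exp (-s * t) *
      (∑' k : ℕ, (b * t ^ α) ^ k / Real.Gamma (α * k + 1)) = ∑' k : ℕ, F k t := by
    intro t
    rw [hF, ← tsum_mul_left]
  calc ∫ t in Set.Ioi (0:ℝ), Real.exp (-s * t) *
        (∑' k : ℕ, (b * t ^ α) ^ k / Real.Gamma (α * k + 1))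
      = ∫ t in Set.Ioi (0:ℝ), ∑' k : ℕ, F k t := by simp_rw [hintegrand]
    _ = ∑' k : ℕ, ∫ t in Set.Ioi (0:ℝ), F k t := hswap.symm
    _ = ∑' k : ℕ, (1 / s) * (b * (s ^ α)⁻¹) ^ k := by
        congr 1; funext k
        rw [hval k, hkey k, mul_pow]
        ring
    _ = (1 / s) * (1 - b * (s ^ α)⁻¹)⁻¹ := by
        rw [tsum_mul_left, tsum_geometric_of_norm_lt_one
          (by rwa [Real.norm_eq_abs, abs_mul, abs_inv, abs_of_pos hsα])]
    _ = s ^ (α - 1) / (s ^ α - b) := by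
        have hne : s ^ α - b ≠ 0 := by
          have : b < s ^ α := lt_of_le_of_lt (le_abs_self b) hb
          linarith
        rw [Real.rpow_sub hs, Real.rpow_one]
        field_simp
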